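/- Let ℤ act on ℂ* = ℂ ∖ {0} (with its subspace topology) by k · z = 2^k z. Then the orbit space ℂ*/ℤ, equipped with the quotient topology, is homeomorphic to the torus S¹ × S¹; in particular it is a compact connected topological space. -/

import Mathlib

noncomputable section

open Real

/-- `ℂ* = ℂ ∖ {0}` with the subspace topology. -/
abbrev Cstar : Type := {z : ℂ // z ≠ 0}

/-- The orbit relation of the `ℤ`-action `k • z = 2^k z` on `ℂ*`. -/
def orbitRel₁ (z w : Cstar) : Prop := ∃ k : ℤ, ((2 : ℝ) ^ k) • (z : ℂ) = (w : ℂ)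

namespace CstarAux

/-- normalization `z ↦ z / |z|` as an element of the circle -/
def nor (z : Cstar) : Circle :=
  ⟨(z : ℂ) / ‖(z : ℂ)‖, by
    have h : ‖(z : ℂ)‖ ≠ 0 := norm_ne_zero_iff.mpr z.2
    show _ ∈ Metric.sphere (0 : ℂ) 1
    rw [mem_sphere_zero_iff_norm]
    simp [norm_div,
      div_self h]⟩

@[simp] lemma coe_nor (z : Cstar) : (nor z : ℂ) = (z : ℂ) / ‖(z : ℂ)‖ := rfl

def f (z : Cstar) : Circle × Circle :=
  (Circle.exp (2 * π / Real.log 2 * Real.log (‖(z : ℂ)‖)), nor z)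

lemma log2_ne : Real.log 2 ≠ 0 := by
  have := Real.log_pos (by norm_num : (1:ℝ) < 2); linarith

lemma abs_pos (z : Cstar) : 0 < ‖(z : ℂ)‖ := norm_pos_iff.mpr z.2

lemma f_const (z w : Cstar) (h : orbitRel₁ z w) : f z = f w := by
  obtain ⟨k, hk⟩ := h
  have h2k : (0:ℝ) < (2:ℝ) ^ k := zpow_pos (by norm_num) k
  have habs : ‖(w : ℂ)‖ = (2:ℝ) ^ k * ‖(z : ℂ)‖ := by
    rw [← hk]
    simp [Complex.real_smul, norm_mul, Complex.norm_real, abs_of_pos h2k]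
  have hlog : Real.log (‖(w : ℂ)‖) =
      k * Real.log 2 + Real.log (‖(z : ℂ)‖) := by
    rw [habs, Real.log_mul (ne_of_gt h2k) (ne_of_gt (abs_pos z)), Real.log_zpow]
  unfold f
  refine Prod.ext ?_ ?_
  · show Circle.exp _ = Circle.exp _
    rw [Circle.exp_eq_exp]
    refine ⟨-k, ?_⟩
    rw [hlog]
    field_simp [log2_ne]
    push_cast
    ring
  · apply Subtype.ext
    have hzc : ((‖(z : ℂ)‖ : ℝ) : ℂ) ≠ 0 := by
      exact_mod_cast ne_of_gt (abs_pos z)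
    have h2c : (((2:ℝ) ^ k : ℝ) : ℂ) ≠ 0 := by exact_mod_cast ne_of_gt h2k
    rw [coe_nor, coe_nor, habs, ← hk, Complex.real_smul]
    push_cast
    rw [mul_div_mul_left _ _ (zpow_ne_zero k (two_ne_zero (α := ℂ)))]

lemma f_cont : Continuous f := by
  have habs : Continuous fun z : Cstar => ‖(z : ℂ)‖ :=
    continuous_norm.comp continuous_subtype_val
  have habsne : ∀ z : Cstar, ‖(z : ℂ)‖ ≠ 0 := fun z => ne_of_gt (abs_pos z)
  refine Continuous.prodMk ?_ ?_
  · exact Circle.exp.continuous.comp ((continuous_const.mul (habs.log habsne)))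
  · apply Continuous.subtype_mk
    exact continuous_subtype_val.div (Complex.continuous_ofReal.comp habs)
      (by intro z; exact_mod_cast habsne z)

lemma f_inj (z w : Cstar) (h : f z = f w) : orbitRel₁ z w := by
  have h1 := congrArg Prod.fst h
  have h2 := congrArg Prod.snd h
  simp only [f] at h1 h2
  rw [Circle.exp_eq_exp] at h1
  obtain ⟨m, hm⟩ := h1
  have hpi : (0:ℝ) < π := Real.pi_pos
  have hlog : Real.log (‖(z : ℂ)‖) =
      Real.log (‖(w : ℂ)‖) + m * Real.log 2 := by
    have h2' : (2 * π / Real.log 2) ≠ 0 := by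
      apply div_ne_zero (by positivity) log2_ne
    field_simp [log2_ne] at hm
    -- hm : 2 * π * log |z| = 2 * π * log |w| + m * (2*π) * log 2 (roughly)
    nlinarith [hm]
  have habs : ‖(z : ℂ)‖ = (2:ℝ) ^ m * ‖(w : ℂ)‖ := by
    have h1 := congrArg Real.exp hlog
    rw [Real.exp_log (abs_pos z), Real.exp_add, Real.exp_log (abs_pos w)] at h1
    have h2 : ((2:ℝ) ^ m) = Real.exp (m * Real.log 2) := by
      rw [← Real.rpow_intCast, Real.rpow_def_of_pos (by norm_num), mul_comm]
    rw [h1, h2]; ring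
  refine ⟨-m, ?_⟩
  have h2m : (0:ℝ) < (2:ℝ) ^ m := zpow_pos (by norm_num) m
  have hzc : ((‖(z : ℂ)‖ : ℝ) : ℂ) ≠ 0 := by
    exact_mod_cast ne_of_gt (abs_pos z)
  have hwc : ((‖(w : ℂ)‖ : ℝ) : ℂ) ≠ 0 := by
    exact_mod_cast ne_of_gt (abs_pos w)
  have hz : (z : ℂ) = ‖(z : ℂ)‖ * (nor z : ℂ) := by
    rw [coe_nor, mul_comm, div_mul_cancel₀ _ hzc]
  have hw : (w : ℂ) = ‖(w : ℂ)‖ * (nor w : ℂ) := by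
    rw [coe_nor, mul_comm, div_mul_cancel₀ _ hwc]
  have hnor : (nor z : ℂ) = (nor w : ℂ) := by rw [h2]
  rw [Complex.real_smul, hz, hw, hnor, habs]
  push_cast
  rw [zpow_neg]
  field_simp

lemma f_surj : Function.Surjective f := by
  rintro ⟨a, b⟩
  obtain ⟨θ, hθ⟩ : ∃ θ, Circle.exp θ = a := ⟨Complex.arg a, Circle.exp_arg a⟩
  set r : ℝ := Real.exp (θ * Real.log 2 / (2 * π))
  have hr : 0 < r := Real.exp_pos _
  refine ⟨⟨r • (b : ℂ), by
      simp only [smul_ne_zero_iff]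
      exact ⟨ne_of_gt hr, b.coe_ne_zero⟩⟩, ?_⟩
  have habs : ‖r • (b : ℂ)‖ = r := by
    rw [Complex.real_smul, norm_mul, Complex.norm_real, Real.norm_eq_abs, abs_of_pos hr, Circle.norm_coe,
      mul_one]
  unfold f
  refine Prod.ext ?_ ?_
  · show Circle.exp _ = a
    rw [← hθ]
    congr 1
    show 2 * π / Real.log 2 * Real.log (‖r • (b:ℂ)‖) = θ
    rw [habs, Real.log_exp]
    field_simp [log2_ne]
  · show nor _ = b
    apply Subtype.ext
    rw [coe_nor]
    show (r • (b : ℂ)) / (‖r • (b:ℂ)‖ : ℝ) = (b : ℂ)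
    rw [habs, Complex.real_smul, mul_comm,
      mul_div_cancel_right₀ _ (by exact_mod_cast ne_of_gt hr)]

/-- the descended map -/
def F : Quot orbitRel₁ → Circle × Circle := Quot.lift f f_const

lemma F_cont : Continuous F := continuous_quot_lift _ f_cont

lemma F_bij : Function.Bijective F := by
  constructor
  · intro x y
    induction x using Quot.ind
    induction y using Quot.ind
    intro h
    exact Quot.sound (f_inj _ _ h)
  · intro p
    obtain ⟨z, hz⟩ := f_surj p
    exact ⟨Quot.mk _ z, hz⟩

lemma quot_compact : CompactSpace (Quot orbitRel₁) := by
  set A : Set ℂ := Metric.closedBall 0 2 ∩ {z | 1 ≤ ‖z‖}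
  have hA : IsCompact A := by
    apply (isCompact_closedBall _ _).inter_right
    exact isClosed_le continuous_const continuous_norm
  have hne : ∀ z ∈ A, z ≠ 0 := by
    rintro z ⟨_, hz⟩ rfl
    simp at hz
    linarith
  set g : A → Quot orbitRel₁ := fun a => Quot.mk _ ⟨a.1, hne a.1 a.2⟩
  have hg : Continuous g := by
    apply Continuous.comp (continuous_quot_mk)
    exact Continuous.subtype_mk continuous_subtype_val _
  have hsurj : Function.Surjective g := by
    intro q
    induction q using Quot.ind with
    | _ z =>
      set k : ℤ := ⌈Real.logb 2 (‖(z : ℂ)‖)⌉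
      set r : ℝ := (2:ℝ) ^ (-k) * ‖(z : ℂ)‖
      have hzpos := abs_pos z
      have h2k : (0:ℝ) < (2:ℝ) ^ (-k) := zpow_pos (by norm_num) _
      have hrpos : 0 < r := mul_pos h2k hzpos
      have hlogb : Real.logb 2 r = Real.logb 2 (‖(z:ℂ)‖) - k := by
        show Real.logb 2 ((2:ℝ) ^ (-k) * ‖(z:ℂ)‖) = _
        rw [Real.logb_mul (ne_of_gt h2k) (ne_of_gt hzpos)]
        simp only [Real.logb, Real.log_zpow]
        field_simp [log2_ne]
        push_cast
        ring
      have hub : Real.logb 2 r ≤ 0 := by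
        rw [hlogb]; have := Int.le_ceil (Real.logb 2 (‖(z:ℂ)‖)); linarith
      have hlb : -1 < Real.logb 2 r := by
        rw [hlogb]
        have := Int.ceil_lt_add_one (Real.logb 2 (‖(z:ℂ)‖))
        push_cast at this ⊢
        linarith
      have hr1 : r ≤ 1 := by
        have h := (Real.rpow_le_rpow_left_iff (x := 2) (y := Real.logb 2 r) (z := (0:ℝ))
          (by norm_num : (1:ℝ) < 2)).2 hub
        rwa [Real.rpow_logb (by norm_num) (by norm_num) hrpos, Real.rpow_zero] at h
      have hr2 : 1/2 < r := by
        have h := (Real.rpow_lt_rpow_left_iff (x := 2) (y := (-1:ℝ)) (z := Real.logb 2 r)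
          (by norm_num : (1:ℝ) < 2)).2 hlb
        rw [Real.rpow_logb (by norm_num) (by norm_num) hrpos] at h
        have h' : (2:ℝ) ^ (-1:ℝ) = 1/2 := by
          rw [show ((-1:ℝ)) = ((-1:ℤ):ℝ) by norm_num, Real.rpow_intCast]
          norm_num
        rw [h'] at h; exact h
      -- use the point 2^(1-k) • z which has abs = 2r ∈ (1, 2]
      set w : ℂ := ((2:ℝ) ^ (1-k) : ℝ) • (z : ℂ)
      have habsw : ‖w‖ = 2 * r := by
        unfold w r
        have h2' : (0:ℝ) < (2:ℝ) ^ (1-k) := zpow_pos (by norm_num) _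
        rw [Complex.real_smul, norm_mul, Complex.norm_real, Real.norm_eq_abs, abs_of_pos h2']
        rw [zpow_sub₀ (by norm_num : (2:ℝ) ≠ 0)]
        ring_nf
        rw [zpow_neg]
        ring
      have hwA : w ∈ A := by
        constructor
        · rw [Metric.mem_closedBall, dist_zero_right, habsw]
          linarith
        · show 1 ≤ ‖w‖
          rw [habsw]; linarith
      refine ⟨⟨w, hwA⟩, ?_⟩
      apply Quot.sound
      refine ⟨k - 1, ?_⟩
      show ((2:ℝ) ^ (k-1)) • (((2:ℝ) ^ (1-k) : ℝ) • (z:ℂ)) = (z:ℂ)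
      rw [smul_smul, ← zpow_add₀ (by norm_num : (2:ℝ) ≠ 0)]
      norm_num
  haveI : CompactSpace A := isCompact_iff_compactSpace.mp hA
  rw [← isCompact_univ_iff, ← hsurj.range_eq]
  exact isCompact_range hg

lemma circle_connected : ConnectedSpace Circle := by
  have : Function.Surjective Circle.exp := fun z => ⟨Complex.arg z, Circle.exp_arg z⟩
  exact this.connectedSpace Circle.exp.continuous

end CstarAux

/-- The orbit space `ℂ* / ℤ` of the action `k • z = 2^k z`, with the quotient topology, is
homeomorphic to the torus `S¹ × S¹`; in particular it is compact and connected. -/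
theorem cstar_quot_homeomorph_torus :
    Nonempty (Quot orbitRel₁ ≃ₜ Circle × Circle) ∧
      CompactSpace (Quot orbitRel₁) ∧ ConnectedSpace (Quot orbitRel₁) := by
  have hc := CstarAux.quot_compact
  have e : Quot orbitRel₁ ≃ₜ Circle × Circle :=
    Continuous.homeoOfEquivCompactToT2 (f := Equiv.ofBijective _ CstarAux.F_bij)
      CstarAux.F_cont
  refine ⟨⟨e⟩, hc, ?_⟩
  have := CstarAux.circle_connected
  exact e.symm.surjective.connectedSpace e.symm.continuous
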